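/- Let X_n be an irreducible Markov chain on the finite set Ā = A ∪ ∂A with ∂A ≠ ∅, let x,y be distinct points of A, and let q(x,y) be the probability that the chain starting at x reaches y strictly before leaving A and strictly before returning to x, i.e. q(x,y) = μ_x(σ_y < min(τ_x, T_A)). Then G_A(x,y) = q(x,y) · G_A(x,x) · G_{A\{x}}(y,y), i.e. G_A(x,y) = q(x,y) F_V(A) with V = {x,y}. -/

import Mathlib

set_option linter.unusedSectionVars false

open MeasureTheory
open scoped ENNReal

/-- `G_B(u,v)` probabilistically: the expected number of visits to `v` strictly before the
exit time of `B`, for the chain with law `μu` (started at `u`). The time `n` counts iff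
`ω n = v` and `ω j ∈ B` for all `j ≤ n` (i.e. `n < T_B`). -/
noncomputable def greenVisits {S : Type*} [MeasurableSpace S] (μu : Measure (ℕ → S)) (B : Finset S) (v : S) :
    ℝ≥0∞ :=
  ∫⁻ ω, ∑' n : ℕ, ({m : ℕ | ω m = v ∧ ∀ j ≤ m, ω j ∈ B}).indicator (fun _ => 1) n ∂μu

open scoped Classical


section PathLemmas

variable {S : Type*}

noncomputable def lw (P : Matrix S S ℝ) : List S → ℝ≥0∞
  | [] => 1
  | [_] => 1
  | s :: t :: r => ENNReal.ofReal (P s t) * lw P (t :: r)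

@[simp] lemma lw_nil (P : Matrix S S ℝ) : lw P [] = 1 := rfl
@[simp] lemma lw_singleton (P : Matrix S S ℝ) (s : S) : lw P [s] = 1 := rfl
@[simp] lemma lw_cons_cons (P : Matrix S S ℝ) (s t : S) (r : List S) :
    lw P (s :: t :: r) = ENNReal.ofReal (P s t) * lw P (t :: r) := rfl

lemma lw_glue (P : Matrix S S ℝ) (l₁ l₂ : List S) (z : S) (h : l₁.getLast? = some z) :
    lw P (l₁ ++ l₂) = lw P l₁ * lw P (z :: l₂) := by
  induction l₁ with
  | nil => simp at h
  | cons s r ih =>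
    cases r with
    | nil =>
      simp only [List.getLast?_singleton, Option.some_inj] at h
      subst h; simp
    | cons t r' =>
      rw [List.getLast?_cons_cons] at h
      have : (s :: t :: r') ++ l₂ = s :: ((t :: r') ++ l₂) := by simp
      rw [this, List.cons_append, lw_cons_cons, ← List.cons_append, ih h, lw_cons_cons,
        mul_assoc]

lemma exists_last_split {x : S} : ∀ {l : List S}, x ∈ l →
    ∃ l₁ l₂ : List S, l = l₁ ++ x :: l₂ ∧ x ∉ l₂ := by
  intro l hl
  induction l with
  | nil => simp at hl
  | cons a r ih =>
    by_cases hr : x ∈ r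
    · obtain ⟨l₁, l₂, h1, h2⟩ := ih hr
      exact ⟨a :: l₁, l₂, by simp [h1], h2⟩
    · have hax : a = x := by
        rcases List.mem_cons.1 hl with h | h
        · exact h.symm
        · exact absurd h hr
      exact ⟨[], r, by simp [hax], hr⟩

lemma exists_first_split {y : S} : ∀ {l : List S}, y ∈ l →
    ∃ l₁ l₂ : List S, l = l₁ ++ y :: l₂ ∧ y ∉ l₁ := by
  intro l hl
  induction l with
  | nil => simp at hl
  | cons a r ih =>
    by_cases hay : a = y
    · exact ⟨[], r, by simp [hay], by simp⟩
    · have hr : y ∈ r := by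
        rcases List.mem_cons.1 hl with h | h
        · exact absurd h.symm hay
        · exact h
      obtain ⟨l₁, l₂, h1, h2⟩ := ih hr
      refine ⟨a :: l₁, l₂, by simp [h1], ?_⟩
      simp only [List.mem_cons, not_or]
      exact ⟨fun h => hay h.symm, h2⟩

lemma last_split_unique {x : S} : ∀ (l₁ : List S) {l₂ m₁ m₂ : List S},
    l₁ ++ x :: l₂ = m₁ ++ x :: m₂ → x ∉ l₂ → x ∉ m₂ → l₁ = m₁ ∧ l₂ = m₂ := by
  intro l₁
  induction l₁ with
  | nil =>
    intro l₂ m₁ m₂ h h2 h3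
    cases m₁ with
    | nil => simpa using h
    | cons b m₁' =>
      simp only [List.nil_append, List.cons_append, List.cons.injEq] at h
      exfalso; apply h2; rw [h.2]; exact List.mem_append_right _ List.mem_cons_self
  | cons a l₁' ih =>
    intro l₂ m₁ m₂ h h2 h3
    cases m₁ with
    | nil =>
      simp only [List.nil_append, List.cons_append, List.cons.injEq] at h
      exfalso; apply h3; rw [← h.2]; exact List.mem_append_right _ List.mem_cons_self
    | cons b m₁' =>
      simp only [List.cons_append, List.cons.injEq] at h
      obtain ⟨h1, h2'⟩ := ih h.2 h2 h3
      exact ⟨by rw [h.1, h1], h2'⟩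

lemma first_split_unique {y : S} : ∀ (l₁ : List S) {l₂ m₁ m₂ : List S},
    l₁ ++ y :: l₂ = m₁ ++ y :: m₂ → y ∉ l₁ → y ∉ m₁ → l₁ = m₁ ∧ l₂ = m₂ := by
  intro l₁
  induction l₁ with
  | nil =>
    intro l₂ m₁ m₂ h h2 h3
    cases m₁ with
    | nil => simpa using h
    | cons b m₁' =>
      simp only [List.nil_append, List.cons_append, List.cons.injEq] at h
      exact absurd (h.1 ▸ (List.mem_cons_self : b ∈ b :: m₁')) h3
  | cons a l₁' ih =>
    intro l₂ m₁ m₂ h h2 h3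
    cases m₁ with
    | nil =>
      simp only [List.nil_append, List.cons_append, List.cons.injEq] at h
      exact absurd (h.1 ▸ (List.mem_cons_self : a ∈ a :: l₁')) h2
    | cons b m₁' =>
      simp only [List.cons_append, List.cons.injEq] at h
      have h2'' : y ∉ l₁' := fun hc => h2 (List.mem_cons_of_mem _ hc)
      have h3'' : y ∉ m₁' := fun hc => h3 (List.mem_cons_of_mem _ hc)
      obtain ⟨h1, hrest⟩ := ih h.2 h2'' h3''
      exact ⟨by rw [h.1, h1], hrest⟩

lemma eq_dropLast_concat {l : List S} {z : S} (h : l.getLast? = some z) :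
    l = l.dropLast ++ [z] := by
  cases l with
  | nil => simp at h
  | cons a r =>
    have hne : a :: r ≠ [] := List.cons_ne_nil a r
    rw [List.getLast?_eq_getLast hne, Option.some_inj] at h
    conv_lhs => rw [← List.dropLast_append_getLast hne]
    rw [h]

lemma head?_eq_cons {l : List S} {z : S} (h : l.head? = some z) : l = z :: l.tail :=
  List.eq_cons_of_mem_head? h

end PathLemmas

section OfFn

variable {S : Type*}

def pext {n : ℕ} (a : Fin (n + 1) → S) : ℕ → S :=
  fun i => a ⟨min i n, Nat.lt_succ_of_le (min_le_right i n)⟩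

lemma pext_eq {n : ℕ} (a : Fin (n + 1) → S) (i : ℕ) (h : i < n + 1) :
    pext a i = a ⟨i, h⟩ := by
  unfold pext
  congr 1
  exact Fin.ext (by simp [Nat.min_eq_left (Nat.lt_succ_iff.1 h)])

lemma pext_zero {n : ℕ} (a : Fin (n + 1) → S) : pext a 0 = a 0 := by
  rw [pext_eq a 0 (Nat.succ_pos n)]
  exact congrArg a (Fin.ext rfl)

lemma head?_ofFn {n : ℕ} (a : Fin (n + 1) → S) : (List.ofFn a).head? = some (a 0) := by
  rw [List.ofFn_succ]; rfl

lemma getLast?_ofFn {n : ℕ} (a : Fin (n + 1) → S) :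
    (List.ofFn a).getLast? = some (a (Fin.last n)) := by
  rw [List.ofFn_succ', List.concat_eq_append, List.getLast?_concat]

lemma tail_dropLast_ofFn {k : ℕ} (a : Fin (k + 2) → S) :
    (List.ofFn a).tail.dropLast = List.ofFn (fun i : Fin k => a i.succ.castSucc) := by
  rw [List.ofFn_succ, List.tail_cons, List.ofFn_succ' (fun i : Fin (k+1) => a i.succ),
    List.concat_eq_append, List.dropLast_concat]
  exact congrArg List.ofFn (funext fun i => congrArg a (Fin.ext (by simp)))

lemma exists_ofFn_of_ne_nil : ∀ {l : List S}, l ≠ [] →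
    ∃ (n : ℕ) (a : Fin (n + 1) → S), l = List.ofFn a := by
  intro l hl
  induction l with
  | nil => exact absurd rfl hl
  | cons a r ih =>
    cases r with
    | nil => exact ⟨0, fun _ => a, by simp⟩
    | cons b r' =>
      obtain ⟨n, f, hf⟩ := ih (List.cons_ne_nil b r')
      refine ⟨n + 1, Fin.cons a f, ?_⟩
      rw [List.ofFn_succ]
      simp [hf]

lemma lw_ofFn (P : Matrix S S ℝ) : ∀ (n : ℕ) (a : Fin (n + 1) → S),
    lw P (List.ofFn a) = ∏ i ∈ Finset.range n, ENNReal.ofReal (P (pext a i) (pext a (i + 1)))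
  | 0, a => by simp [List.ofFn_succ]
  | (n + 1), a => by
    have h1 : List.ofFn a = a 0 :: List.ofFn (fun i : Fin (n + 1) => a i.succ) :=
      List.ofFn_succ
    have h2 : List.ofFn (fun i : Fin (n + 1) => a i.succ) =
        a (Fin.succ 0) :: List.ofFn (fun i : Fin n => a i.succ.succ) := by
      rw [List.ofFn_succ]
    have key : ∀ i : ℕ, pext (fun j : Fin (n + 1) => a j.succ) i = pext a (i + 1) := by
      intro i
      show a (Fin.succ ⟨min i n, _⟩) = a ⟨min (i + 1) (n + 1), _⟩
      exact congrArg a (Fin.ext (by simp only [Fin.val_succ]; omega))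
    rw [h1, h2, lw_cons_cons, ← h2, lw_ofFn P n (fun i : Fin (n + 1) => a i.succ),
      Finset.prod_range_succ']
    simp only [key]
    rw [mul_comm]
    congr 1

end OfFn

section Meas

variable {S : Type*} [Fintype S] [MeasurableSpace S] [MeasurableSingletonClass S]

lemma measurable_cyl (n : ℕ) (a : Fin (n + 1) → S) :
    MeasurableSet {ω : ℕ → S | ∀ i : Fin (n + 1), ω i = a i} := by
  have : {ω : ℕ → S | ∀ i : Fin (n + 1), ω i = a i} =
      ⋂ i : Fin (n + 1), (fun ω : ℕ → S => ω i) ⁻¹' {a i} := by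
    ext ω; simp
  rw [this]
  exact MeasurableSet.iInter fun i => measurable_pi_apply _ (measurableSet_singleton _)

lemma event_eq_biUnion (n : ℕ) (C : (Fin (n + 1) → S) → Prop) :
    {ω : ℕ → S | C fun i => ω i} =
      ⋃ a ∈ Finset.univ.filter (fun a : Fin (n + 1) → S => C a),
        {ω : ℕ → S | ∀ i : Fin (n + 1), ω i = a i} := by
  ext ω
  simp only [Set.mem_iUnion, Finset.mem_filter, Finset.mem_univ, true_and, Set.mem_setOf_eq]
  constructor
  · intro h; exact ⟨fun i => ω i, h, fun i => rfl⟩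
  · rintro ⟨a, hC, ha⟩
    have : (fun i : Fin (n + 1) => ω i) = a := funext ha
    rwa [this]

lemma measurableSet_event (n : ℕ) (C : (Fin (n + 1) → S) → Prop) :
    MeasurableSet {ω : ℕ → S | C fun i => ω i} := by
  rw [event_eq_biUnion]
  exact (Finset.univ.filter _).measurableSet_biUnion fun a _ => measurable_cyl n a

lemma measure_event (μu : Measure (ℕ → S)) (n : ℕ) (C : (Fin (n + 1) → S) → Prop) :
    μu {ω : ℕ → S | C fun i => ω i} =
      ∑ a : Fin (n + 1) → S, if C a then μu {ω : ℕ → S | ∀ i ≤ n, ω i = pext a i} else 0 := by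
  have cyl_eq : ∀ a : Fin (n + 1) → S,
      {ω : ℕ → S | ∀ i : Fin (n + 1), ω i = a i} = {ω : ℕ → S | ∀ i ≤ n, ω i = pext a i} := by
    intro a
    ext ω
    simp only [Set.mem_setOf_eq]
    constructor
    · intro h i hi
      rw [pext_eq a i (Nat.lt_succ_of_le hi)]
      exact h ⟨i, Nat.lt_succ_of_le hi⟩
    · intro h i
      have h' := h i (Nat.lt_succ_iff.1 i.isLt)
      rw [pext_eq a i i.isLt] at h'
      simpa using h'
  rw [event_eq_biUnion]
  rw [measure_biUnion_finset ?_ fun a _ => measurable_cyl n a]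
  · rw [Finset.sum_filter]
    exact Finset.sum_congr rfl fun a _ => by rw [cyl_eq a]
  · intro a ha b hb hab
    refine Set.disjoint_left.2 fun ω h1 h2 => hab ?_
    exact funext fun i => (h1 i).symm.trans (h2 i)

end Meas
section Green

variable {S : Type*} [Fintype S] [DecidableEq S] [MeasurableSpace S] [MeasurableSingletonClass S]

lemma green_list (P : Matrix S S ℝ) (hnn : ∀ u v, 0 ≤ P u v)
    (μu : Measure (ℕ → S)) (u : S)
    (hμu : ∀ (n : ℕ) (a : ℕ → S),
      μu {ω | ∀ i ≤ n, ω i = a i} =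
        ENNReal.ofReal ((if a 0 = u then (1 : ℝ) else 0) *
          ∏ i ∈ Finset.range n, P (a i) (a (i + 1))))
    (B : Finset S) (v : S) :
    greenVisits μu B v = ∑' l : List S,
      if l.head? = some u ∧ l.getLast? = some v ∧ ∀ s ∈ l, s ∈ B then lw P l else 0 := by
  classical
  -- Step A : reduce greenVisits to a sum over n of measures of coordinate events
  have hA : greenVisits μu B v = ∑' n : ℕ,
      μu {ω : ℕ → S | (fun a : Fin (n + 1) → S =>
        a (Fin.last n) = v ∧ ∀ i, a i ∈ B) fun i => ω i} := by
    unfold greenVisits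
    have hpt : ∀ (n : ℕ) (ω : ℕ → S),
        ({m : ℕ | ω m = v ∧ ∀ j ≤ m, ω j ∈ B}).indicator (fun _ => (1 : ℝ≥0∞)) n
          = ({ω : ℕ → S | (fun a : Fin (n + 1) → S =>
              a (Fin.last n) = v ∧ ∀ i, a i ∈ B) fun i => ω i}).indicator (fun _ => 1) ω := by
      intro n ω
      have hiff : (ω n = v ∧ ∀ j ≤ n, ω j ∈ B) ↔
          ((fun i : Fin (n + 1) => ω i) (Fin.last n) = v ∧ ∀ i : Fin (n + 1), ω i ∈ B) := by
        constructor
        · rintro ⟨h1, h2⟩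
          exact ⟨by simpa using h1, fun i => h2 i (Nat.lt_succ_iff.1 i.isLt)⟩
        · rintro ⟨h1, h2⟩
          refine ⟨by simpa using h1, fun j hj => ?_⟩
          exact h2 ⟨j, Nat.lt_succ_of_le hj⟩
      simp only [Set.indicator_apply, Set.mem_setOf_eq]
      by_cases h : ω n = v ∧ ∀ j ≤ n, ω j ∈ B
      · rw [if_pos h, if_pos (hiff.1 h)]
      · rw [if_neg h, if_neg fun hc => h (hiff.2 hc)]
    calc ∫⁻ ω, ∑' n : ℕ, ({m : ℕ | ω m = v ∧ ∀ j ≤ m, ω j ∈ B}).indicator (fun _ => 1) n ∂μu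
        = ∫⁻ ω, ∑' n : ℕ, ({ω' : ℕ → S | (fun a : Fin (n + 1) → S =>
            a (Fin.last n) = v ∧ ∀ i, a i ∈ B) fun i => ω' i}).indicator (fun _ => 1) ω ∂μu := by
          exact lintegral_congr fun ω => tsum_congr fun n => hpt n ω
      _ = ∑' n : ℕ, ∫⁻ ω, ({ω' : ℕ → S | (fun a : Fin (n + 1) → S =>
            a (Fin.last n) = v ∧ ∀ i, a i ∈ B) fun i => ω' i}).indicator (fun _ => 1) ω ∂μu := by
          exact lintegral_tsum fun n =>
            (measurable_const.indicator (measurableSet_event n (fun a : Fin (n + 1) → S =>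
              a (Fin.last n) = v ∧ ∀ i, a i ∈ B))).aemeasurable
      _ = ∑' n : ℕ, μu {ω : ℕ → S | (fun a : Fin (n + 1) → S =>
            a (Fin.last n) = v ∧ ∀ i, a i ∈ B) fun i => ω i} := by
          refine tsum_congr fun n => ?_
          exact lintegral_indicator_one (measurableSet_event n (fun a : Fin (n + 1) → S =>
            a (Fin.last n) = v ∧ ∀ i, a i ∈ B))
  -- Step B : each term is a sum over finite paths
  have hB : ∀ n : ℕ, μu {ω : ℕ → S | (fun a : Fin (n + 1) → S =>
        a (Fin.last n) = v ∧ ∀ i, a i ∈ B) fun i => ω i}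
      = ∑ a : Fin (n + 1) → S,
          if (List.ofFn a).head? = some u ∧ (List.ofFn a).getLast? = some v ∧
              ∀ s ∈ List.ofFn a, s ∈ B then lw P (List.ofFn a) else 0 := by
    intro n
    rw [measure_event μu n (fun a : Fin (n + 1) → S => a (Fin.last n) = v ∧ ∀ i, a i ∈ B)]
    refine Finset.sum_congr rfl fun a _ => ?_
    rw [hμu n (pext a)]
    have hhead : (List.ofFn a).head? = some (a 0) := head?_ofFn a
    have hlast : (List.ofFn a).getLast? = some (a (Fin.last n)) := getLast?_ofFn a
    by_cases h0 : a 0 = u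
    · by_cases hCa : a (Fin.last n) = v ∧ ∀ i, a i ∈ B
      · rw [if_pos hCa, pext_zero, if_pos h0, one_mul,
          ENNReal.ofReal_prod_of_nonneg fun i _ => hnn _ _, ← lw_ofFn, if_pos]
        refine ⟨by rw [hhead, h0], by rw [hlast, hCa.1], fun s hs => ?_⟩
        rw [List.mem_ofFn] at hs
        obtain ⟨i, rfl⟩ := hs
        exact hCa.2 i
      · rw [if_neg hCa, if_neg]
        rintro ⟨h1, h2, h3⟩
        refine hCa ⟨?_, fun i => h3 (a i) ?_⟩
        · rw [hlast, Option.some_inj] at h2; exact h2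
        · rw [List.mem_ofFn]; exact ⟨i, rfl⟩
    · rw [pext_zero, if_neg h0, zero_mul, ENNReal.ofReal_zero, ite_self, eq_comm, if_neg]
      rintro ⟨h1, -, -⟩
      rw [hhead, Option.some_inj] at h1
      exact h0 h1
  -- Step C : sigma / list reindexing
  rw [hA]
  have hC : ∀ n : ℕ, (∑ a : Fin (n + 1) → S,
      if (List.ofFn a).head? = some u ∧ (List.ofFn a).getLast? = some v ∧
          ∀ s ∈ List.ofFn a, s ∈ B then lw P (List.ofFn a) else 0)
      = ∑' a : Fin (n + 1) → S,
      if (List.ofFn a).head? = some u ∧ (List.ofFn a).getLast? = some v ∧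
          ∀ s ∈ List.ofFn a, s ∈ B then lw P (List.ofFn a) else 0 :=
    fun n => (tsum_fintype _).symm
  calc (∑' n : ℕ, μu {ω : ℕ → S | (fun a : Fin (n + 1) → S =>
        a (Fin.last n) = v ∧ ∀ i, a i ∈ B) fun i => ω i})
      = ∑' (n : ℕ) (a : Fin (n + 1) → S),
          if (List.ofFn a).head? = some u ∧ (List.ofFn a).getLast? = some v ∧
              ∀ s ∈ List.ofFn a, s ∈ B then lw P (List.ofFn a) else 0 := by
        exact tsum_congr fun n => (hB n).trans (hC n)
    _ = ∑' p : Σ n : ℕ, Fin (n + 1) → S,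
          if (List.ofFn p.2).head? = some u ∧ (List.ofFn p.2).getLast? = some v ∧
              ∀ s ∈ List.ofFn p.2, s ∈ B then lw P (List.ofFn p.2) else 0 :=
        (ENNReal.tsum_sigma fun n a =>
          if (List.ofFn a).head? = some u ∧ (List.ofFn a).getLast? = some v ∧
              ∀ s ∈ List.ofFn a, s ∈ B then lw P (List.ofFn a) else 0).symm
    _ = ∑' l : List S,
          if l.head? = some u ∧ l.getLast? = some v ∧ ∀ s ∈ l, s ∈ B then lw P l else 0 := by
        refine (tsum_eq_tsum_of_ne_zero_bij (fun p => List.ofFn p.1.2) ?_ ?_ ?_).symm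
        · rintro ⟨⟨n, a⟩, ha⟩ ⟨⟨m, b⟩, hb⟩ h
          simp only at h
          have hlen : n = m := by
            have := congrArg List.length h
            simpa using this
          subst hlen
          have hab : a = b := List.ofFn_injective h
          subst hab
          rfl
        · rintro l hl
          have hcond : l.head? = some u ∧ l.getLast? = some v ∧ ∀ s ∈ l, s ∈ B := by
            by_contra hc
            exact hl (if_neg hc)
          have hne : l ≠ [] := by
            intro h
            rw [h] at hcond
            simp at hcond
          obtain ⟨n, a, rfl⟩ := exists_ofFn_of_ne_nil hne
          exact ⟨⟨⟨n, a⟩, hl⟩, rfl⟩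
        · rintro ⟨⟨n, a⟩, ha⟩
          rfl

end Green
section QList

variable {S : Type*} [Fintype S] [DecidableEq S] [MeasurableSpace S] [MeasurableSingletonClass S]

lemma q_list (P : Matrix S S ℝ) (hnn : ∀ u v, 0 ≤ P u v)
    (A : Finset S) (x y : S)
    (μx : Measure (ℕ → S))
    (hμx : ∀ (n : ℕ) (a : ℕ → S),
      μx {ω | ∀ i ≤ n, ω i = a i} =
        ENNReal.ofReal ((if a 0 = x then (1 : ℝ) else 0) *
          ∏ i ∈ Finset.range n, P (a i) (a (i + 1)))) :
    μx {ω : ℕ → S | ∃ k : ℕ, 1 ≤ k ∧ ω k = y ∧ ∀ j : ℕ, 1 ≤ j → j < k → ω j ≠ x ∧ ω j ∈ A}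
      = ∑' l : List S, if l.head? = some x ∧ l.getLast? = some y ∧ 2 ≤ l.length ∧
          ∀ s ∈ l.tail.dropLast, s ∈ A ∧ s ≠ x ∧ s ≠ y then lw P l else 0 := by
  classical
  -- decompose by the first hitting time of y
  have hdecomp : {ω : ℕ → S | ∃ k : ℕ, 1 ≤ k ∧ ω k = y ∧
        ∀ j : ℕ, 1 ≤ j → j < k → ω j ≠ x ∧ ω j ∈ A}
      = ⋃ k : ℕ, {ω : ℕ → S | (fun a : Fin (k + 2) → S => a (Fin.last (k + 1)) = y ∧
          ∀ i : Fin (k + 2), 0 < (i : ℕ) → (i : ℕ) < k + 1 →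
            (a i ∈ A ∧ a i ≠ x ∧ a i ≠ y)) fun i => ω i} := by
    ext ω
    simp only [Set.mem_setOf_eq, Set.mem_iUnion]
    constructor
    · rintro ⟨k, hk1, hk2, hk3⟩
      have hQ : ∃ m : ℕ, 1 ≤ m ∧ ω m = y ∧ ∀ j : ℕ, 1 ≤ j → j < m → ω j ≠ x ∧ ω j ∈ A :=
        ⟨k, hk1, hk2, hk3⟩
      have hspec := Nat.find_spec hQ
      have hm1 : 1 ≤ Nat.find hQ := hspec.1
      refine ⟨Nat.find hQ - 1, ?_, ?_⟩
      · show ω ((Fin.last (Nat.find hQ - 1 + 1) : Fin (Nat.find hQ - 1 + 2)) : ℕ) = y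
        rw [Fin.val_last]
        have : Nat.find hQ - 1 + 1 = Nat.find hQ := by omega
        rw [this]
        exact hspec.2.1
      · intro i hi1 hi2
        have hiv : (1 : ℕ) ≤ (i : ℕ) ∧ (i : ℕ) < Nat.find hQ := by
          constructor <;> omega
        have hxa := hspec.2.2 (i : ℕ) hiv.1 hiv.2
        refine ⟨hxa.2, hxa.1, ?_⟩
        intro hyy
        have hQi : 1 ≤ (i : ℕ) ∧ ω (i : ℕ) = y ∧
            ∀ j : ℕ, 1 ≤ j → j < (i : ℕ) → ω j ≠ x ∧ ω j ∈ A :=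
          ⟨hiv.1, hyy, fun j h1 h2 => hspec.2.2 j h1 (by omega)⟩
        exact Nat.find_min hQ hiv.2 hQi
    · rintro ⟨k, hk⟩
      have hk1 : ω (k + 1) = y := by
        have := hk.1
        simpa using this
      refine ⟨k + 1, by omega, hk1, fun j h1 h2 => ?_⟩
      have := hk.2 ⟨j, by omega⟩ (by show 0 < j; omega) (by simpa using h2)
      exact ⟨this.2.1, this.1⟩
  rw [hdecomp, measure_iUnion ?_ fun k => measurableSet_event (k + 1)
    (fun a : Fin (k + 2) → S => a (Fin.last (k + 1)) = y ∧
      ∀ i : Fin (k + 2), 0 < (i : ℕ) → (i : ℕ) < k + 1 → (a i ∈ A ∧ a i ≠ x ∧ a i ≠ y))]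
  swap
  · have key : ∀ k k' : ℕ, k < k' →
        Disjoint {ω : ℕ → S | (fun a : Fin (k + 2) → S => a (Fin.last (k + 1)) = y ∧
            ∀ i : Fin (k + 2), 0 < (i : ℕ) → (i : ℕ) < k + 1 →
              (a i ∈ A ∧ a i ≠ x ∧ a i ≠ y)) fun i => ω i}
          {ω : ℕ → S | (fun a : Fin (k' + 2) → S => a (Fin.last (k' + 1)) = y ∧
            ∀ i : Fin (k' + 2), 0 < (i : ℕ) → (i : ℕ) < k' + 1 →
              (a i ∈ A ∧ a i ≠ x ∧ a i ≠ y)) fun i => ω i} := by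
      intro k k' hlt
      refine Set.disjoint_left.2 fun ω h1 h2 => ?_
      have hy1 : ω (k + 1) = y := by simpa using h1.1
      have hy2 : ω (k + 1) ≠ y := by
        have := h2.2 ⟨k + 1, by omega⟩ (by simp) (by simp; omega)
        simpa using this.2.2
      exact hy2 hy1
    exact fun k k' hne => hne.lt_or_gt.elim (key k k') fun h => (key k' k h).symm
  -- each piece is a path sum
  have hB : ∀ k : ℕ, μx {ω : ℕ → S | (fun a : Fin (k + 2) → S => a (Fin.last (k + 1)) = y ∧
        ∀ i : Fin (k + 2), 0 < (i : ℕ) → (i : ℕ) < k + 1 →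
          (a i ∈ A ∧ a i ≠ x ∧ a i ≠ y)) fun i => ω i}
      = ∑ a : Fin (k + 2) → S,
          if (List.ofFn a).head? = some x ∧ (List.ofFn a).getLast? = some y ∧
              2 ≤ (List.ofFn a).length ∧
              ∀ s ∈ (List.ofFn a).tail.dropLast, s ∈ A ∧ s ≠ x ∧ s ≠ y
            then lw P (List.ofFn a) else 0 := by
    intro k
    rw [measure_event μx (k + 1) (fun a : Fin (k + 2) → S => a (Fin.last (k + 1)) = y ∧
      ∀ i : Fin (k + 2), 0 < (i : ℕ) → (i : ℕ) < k + 1 → (a i ∈ A ∧ a i ≠ x ∧ a i ≠ y))]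
    refine Finset.sum_congr rfl fun a _ => ?_
    rw [hμx (k + 1) (pext a)]
    have hhead : (List.ofFn a).head? = some (a 0) := head?_ofFn a
    have hlast : (List.ofFn a).getLast? = some (a (Fin.last (k + 1))) := getLast?_ofFn a
    have hint : (∀ s ∈ (List.ofFn a).tail.dropLast, s ∈ A ∧ s ≠ x ∧ s ≠ y) ↔
        (∀ i : Fin (k + 2), 0 < (i : ℕ) → (i : ℕ) < k + 1 →
          (a i ∈ A ∧ a i ≠ x ∧ a i ≠ y)) := by
      rw [tail_dropLast_ofFn]
      constructor
      · intro h i h1 h2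
        have hieq : i = (⟨(i : ℕ) - 1, by omega⟩ : Fin k).succ.castSucc := by
          refine Fin.ext ?_
          simp only [Fin.coe_castSucc, Fin.val_succ]
          omega
        rw [hieq]
        exact h _ (by rw [List.mem_ofFn]; exact ⟨_, rfl⟩)
      · intro h s hs
        rw [List.mem_ofFn] at hs
        obtain ⟨j, rfl⟩ := hs
        refine h j.succ.castSucc ?_ ?_
        · simp
        · simp only [Fin.coe_castSucc, Fin.val_succ]
          omega
    by_cases h0 : a 0 = x
    · by_cases hCa : a (Fin.last (k + 1)) = y ∧
          ∀ i : Fin (k + 2), 0 < (i : ℕ) → (i : ℕ) < k + 1 → (a i ∈ A ∧ a i ≠ x ∧ a i ≠ y)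
      · rw [if_pos hCa, pext_zero, if_pos h0, one_mul,
          ENNReal.ofReal_prod_of_nonneg fun i _ => hnn _ _, ← lw_ofFn, if_pos]
        refine ⟨by rw [hhead, h0], by rw [hlast, hCa.1], ?_, hint.2 hCa.2⟩
        rw [List.length_ofFn]
        omega
      · rw [if_neg hCa, if_neg]
        rintro ⟨h1, h2, h3, h4⟩
        refine hCa ⟨?_, hint.1 h4⟩
        rw [hlast, Option.some_inj] at h2
        exact h2
    · rw [pext_zero, if_neg h0, zero_mul, ENNReal.ofReal_zero, ite_self, eq_comm, if_neg]
      rintro ⟨h1, -, -, -⟩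
      rw [hhead, Option.some_inj] at h1
      exact h0 h1
  -- sigma / list reindexing
  calc (∑' k : ℕ, μx {ω : ℕ → S | (fun a : Fin (k + 2) → S => a (Fin.last (k + 1)) = y ∧
        ∀ i : Fin (k + 2), 0 < (i : ℕ) → (i : ℕ) < k + 1 →
          (a i ∈ A ∧ a i ≠ x ∧ a i ≠ y)) fun i => ω i})
      = ∑' (k : ℕ) (a : Fin (k + 2) → S),
          if (List.ofFn a).head? = some x ∧ (List.ofFn a).getLast? = some y ∧
              2 ≤ (List.ofFn a).length ∧
              ∀ s ∈ (List.ofFn a).tail.dropLast, s ∈ A ∧ s ≠ x ∧ s ≠ y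
            then lw P (List.ofFn a) else 0 := by
        exact tsum_congr fun k => (hB k).trans (tsum_fintype _).symm
    _ = ∑' p : Σ k : ℕ, Fin (k + 2) → S,
          if (List.ofFn p.2).head? = some x ∧ (List.ofFn p.2).getLast? = some y ∧
              2 ≤ (List.ofFn p.2).length ∧
              ∀ s ∈ (List.ofFn p.2).tail.dropLast, s ∈ A ∧ s ≠ x ∧ s ≠ y
            then lw P (List.ofFn p.2) else 0 :=
        (ENNReal.tsum_sigma _).symm
    _ = ∑' l : List S, if l.head? = some x ∧ l.getLast? = some y ∧ 2 ≤ l.length ∧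
          ∀ s ∈ l.tail.dropLast, s ∈ A ∧ s ≠ x ∧ s ≠ y then lw P l else 0 := by
        refine (tsum_eq_tsum_of_ne_zero_bij (fun p => List.ofFn p.1.2) ?_ ?_ ?_).symm
        · rintro ⟨⟨n, a⟩, ha⟩ ⟨⟨m, b⟩, hb⟩ h
          simp only at h
          have hlen : n = m := by
            have := congrArg List.length h
            simpa using this
          subst hlen
          have hab : a = b := List.ofFn_injective h
          subst hab
          rfl
        · rintro l hl
          have hcond : l.head? = some x ∧ l.getLast? = some y ∧ 2 ≤ l.length ∧
              ∀ s ∈ l.tail.dropLast, s ∈ A ∧ s ≠ x ∧ s ≠ y := by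
            by_contra hc
            exact hl (if_neg hc)
          have hne : l ≠ [] := by
            intro h
            rw [h] at hcond
            simp at hcond
          obtain ⟨n, a, rfl⟩ := exists_ofFn_of_ne_nil hne
          cases n with
          | zero =>
            exfalso
            have := hcond.2.2.1
            simp at this
          | succ k => exact ⟨⟨⟨k, a⟩, hl⟩, rfl⟩
        · rintro ⟨⟨n, a⟩, ha⟩
          rfl

end QList
section Split

variable {S : Type*} [Fintype S] [DecidableEq S]

lemma mem_of_getLast?_eq {l : List S} {z : S} (h : l.getLast? = some z) : z ∈ l := by
  have hz : z ∈ l.getLast? := by rw [h]; rfl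
  obtain ⟨h', heq⟩ := List.mem_getLast?_eq_getLast hz
  rw [heq]
  exact List.getLast_mem h'

lemma ne_zero_cond {p : Prop} [Decidable p] {v : ℝ≥0∞} (h : (if p then v else 0) ≠ 0) :
    p ∧ v ≠ 0 := by
  by_cases hp : p
  · exact ⟨hp, by simpa [hp] using h⟩
  · simp [hp] at h

lemma triple_cond {p q r : Prop} [Decidable p] [Decidable q] [Decidable r] {a b c : ℝ≥0∞}
    (h : (if p then a else 0) * ((if q then b else 0) * (if r then c else 0)) ≠ 0) :
    p ∧ q ∧ r := by
  by_cases hp : p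
  · by_cases hq : q
    · by_cases hr : r
      · exact ⟨hp, hq, hr⟩
      · simp [hp, hq, hr] at h
    · simp [hp, hq] at h
  · simp [hp] at h

lemma glue_lw (P : Matrix S S ℝ) {b c d : List S} {x y : S}
    (hb : b.getLast? = some x) (hc : c.head? = some x)
    (hc2 : c.getLast? = some y) (hd : d.head? = some y) :
    lw P (b ++ c.tail ++ d.tail) = lw P b * (lw P c * lw P d) := by
  rw [List.append_assoc, lw_glue P b _ x hb]
  have h1 : x :: (c.tail ++ d.tail) = c ++ d.tail := by
    conv_rhs => rw [head?_eq_cons hc]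
    rfl
  rw [h1, lw_glue P c _ y hc2, ← head?_eq_cons hd]

lemma key_split (P : Matrix S S ℝ) (A : Finset S) (x y : S)
    (hx : x ∈ A) (hy : y ∈ A) (hxy : x ≠ y) :
    (∑' l : List S, if l.head? = some x ∧ l.getLast? = some y ∧ ∀ s ∈ l, s ∈ A
        then lw P l else 0)
      = (∑' l : List S, if l.head? = some x ∧ l.getLast? = some y ∧ 2 ≤ l.length ∧
            ∀ s ∈ l.tail.dropLast, s ∈ A ∧ s ≠ x ∧ s ≠ y then lw P l else 0)
        * ((∑' l : List S, if l.head? = some x ∧ l.getLast? = some x ∧ ∀ s ∈ l, s ∈ A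
            then lw P l else 0)
          * (∑' l : List S, if l.head? = some y ∧ l.getLast? = some y ∧
              ∀ s ∈ l, s ∈ A.erase x then lw P l else 0)) := by
  classical
  have key2 : ∀ {α β : Type _} (G : α → ℝ≥0∞) (H : β → ℝ≥0∞),
      (∑' a, G a) * (∑' b, H b) = ∑' q : α × β, G q.1 * H q.2 := by
    intro α β G H
    rw [ENNReal.tsum_prod']
    calc (∑' a, G a) * (∑' b, H b) = ∑' a, G a * ∑' b, H b := ENNReal.tsum_mul_right.symm
      _ = ∑' (a) (b), G a * H b := tsum_congr fun a => ENNReal.tsum_mul_left.symm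
  rw [key2 (fun l : List S => if l.head? = some x ∧ l.getLast? = some x ∧ ∀ s ∈ l, s ∈ A
        then lw P l else 0)
      (fun l : List S => if l.head? = some y ∧ l.getLast? = some y ∧ ∀ s ∈ l, s ∈ A.erase x
        then lw P l else 0),
    key2 (fun l : List S => if l.head? = some x ∧ l.getLast? = some y ∧ 2 ≤ l.length ∧
        ∀ s ∈ l.tail.dropLast, s ∈ A ∧ s ≠ x ∧ s ≠ y then lw P l else 0)
      (fun q : List S × List S =>
        (if q.1.head? = some x ∧ q.1.getLast? = some x ∧ ∀ s ∈ q.1, s ∈ A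
          then lw P q.1 else 0) *
        (if q.2.head? = some y ∧ q.2.getLast? = some y ∧ ∀ s ∈ q.2, s ∈ A.erase x
          then lw P q.2 else 0))]
  refine tsum_eq_tsum_of_ne_zero_bij
    (fun t => t.1.2.1 ++ t.1.1.tail ++ t.1.2.2.tail) ?_ ?_ ?_
  · -- injectivity
    rintro ⟨⟨c, b, d⟩, ht⟩ ⟨⟨c', b', d'⟩, ht'⟩ h
    have ht1 : (if c.head? = some x ∧ c.getLast? = some y ∧ 2 ≤ c.length ∧
          ∀ s ∈ c.tail.dropLast, s ∈ A ∧ s ≠ x ∧ s ≠ y then lw P c else 0) *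
        ((if b.head? = some x ∧ b.getLast? = some x ∧ ∀ s ∈ b, s ∈ A then lw P b else 0) *
         (if d.head? = some y ∧ d.getLast? = some y ∧ ∀ s ∈ d, s ∈ A.erase x
          then lw P d else 0)) ≠ 0 := ht
    have ht2 : (if c'.head? = some x ∧ c'.getLast? = some y ∧ 2 ≤ c'.length ∧
          ∀ s ∈ c'.tail.dropLast, s ∈ A ∧ s ≠ x ∧ s ≠ y then lw P c' else 0) *
        ((if b'.head? = some x ∧ b'.getLast? = some x ∧ ∀ s ∈ b', s ∈ A then lw P b' else 0) *
         (if d'.head? = some y ∧ d'.getLast? = some y ∧ ∀ s ∈ d', s ∈ A.erase x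
          then lw P d' else 0)) ≠ 0 := ht'
    obtain ⟨hqc, hgb, hhd⟩ := triple_cond ht1
    obtain ⟨hqc', hgb', hhd'⟩ := triple_cond ht2
    have h' : b ++ c.tail ++ d.tail = b' ++ c'.tail ++ d'.tail := h
    -- structural facts
    have hbsp : b = b.dropLast ++ [x] := eq_dropLast_concat hgb.2.1
    have hbsp' : b' = b'.dropLast ++ [x] := eq_dropLast_concat hgb'.2.1
    have hcspf : ∀ c₀ : List S, c₀.head? = some x → c₀.getLast? = some y → 2 ≤ c₀.length →
        c₀.tail = c₀.tail.dropLast ++ [y] := by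
      intro c₀ h1 h2 h3
      refine eq_dropLast_concat ?_
      have hcc : c₀ = x :: c₀.tail := head?_eq_cons h1
      cases hct : c₀.tail with
      | nil => exfalso; rw [hcc, hct] at h3; simp at h3
      | cons t r =>
        rw [hcc, hct, List.getLast?_cons_cons] at h2
        exact h2
    have hcsp : c.tail = c.tail.dropLast ++ [y] := hcspf c hqc.1 hqc.2.1 hqc.2.2.1
    have hcsp' : c'.tail = c'.tail.dropLast ++ [y] := hcspf c' hqc'.1 hqc'.2.1 hqc'.2.2.1
    have hxnot : ∀ (c₀ d₀ : List S), c₀.tail = c₀.tail.dropLast ++ [y] →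
        (∀ s ∈ c₀.tail.dropLast, s ∈ A ∧ s ≠ x ∧ s ≠ y) →
        (∀ s ∈ d₀, s ∈ A.erase x) → x ∉ c₀.tail ++ d₀.tail := by
      intro c₀ d₀ hsp hint hmem hmemx
      rcases List.mem_append.1 hmemx with hx1 | hx2
      · rw [hsp] at hx1
        rcases List.mem_append.1 hx1 with hx3 | hx4
        · exact (hint x hx3).2.1 rfl
        · simp at hx4; exact hxy hx4
      · exact (Finset.mem_erase.1 (hmem x (List.mem_of_mem_tail hx2))).1 rfl
    have h'' : b.dropLast ++ x :: (c.tail ++ d.tail) =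
        b'.dropLast ++ x :: (c'.tail ++ d'.tail) := by
      have e1 : b ++ c.tail ++ d.tail = b.dropLast ++ x :: (c.tail ++ d.tail) := by
        conv_lhs => rw [hbsp]
        simp
      have e2 : b' ++ c'.tail ++ d'.tail = b'.dropLast ++ x :: (c'.tail ++ d'.tail) := by
        conv_lhs => rw [hbsp']
        simp
      rw [← e1, ← e2, h']
    obtain ⟨hb1, hcd⟩ := last_split_unique b.dropLast h''
      (hxnot c d hcsp hqc.2.2.2 hhd.2.2) (hxnot c' d' hcsp' hqc'.2.2.2 hhd'.2.2)
    have hbeq : b = b' := by rw [hbsp, hbsp', hb1]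
    have hcd' : c.tail.dropLast ++ y :: d.tail = c'.tail.dropLast ++ y :: d'.tail := by
      have e1 : c.tail ++ d.tail = c.tail.dropLast ++ y :: d.tail := by
        conv_lhs => rw [hcsp]
        simp
      have e2 : c'.tail ++ d'.tail = c'.tail.dropLast ++ y :: d'.tail := by
        conv_lhs => rw [hcsp']
        simp
      rw [← e1, ← e2, hcd]
    obtain ⟨hc1, hd1⟩ := first_split_unique c.tail.dropLast hcd'
      (fun hc0 => (hqc.2.2.2 y hc0).2.2 rfl) (fun hc0 => (hqc'.2.2.2 y hc0).2.2 rfl)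
    have hceq : c = c' := by
      conv_lhs => rw [head?_eq_cons hqc.1, hcsp, hc1]
      conv_rhs => rw [head?_eq_cons hqc'.1, hcsp']
    have hdeq : d = d' := by
      conv_lhs => rw [head?_eq_cons hhd.1, hd1]
      conv_rhs => rw [head?_eq_cons hhd'.1]
    apply Subtype.ext
    simp only [Prod.mk.injEq]
    exact ⟨hceq, hbeq, hdeq⟩
  · -- surjectivity onto the support
    rintro l hl
    simp only [Function.mem_support] at hl
    obtain ⟨hcond, hlwl⟩ := ne_zero_cond hl
    obtain ⟨hhead, hlast, hmem⟩ := hcond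
    have hlx : l = x :: l.tail := head?_eq_cons hhead
    have hxl : x ∈ l := by rw [hlx]; exact List.mem_cons_self
    obtain ⟨p, r, hpr, hxr⟩ := exists_last_split hxl
    have hlastr : (x :: r).getLast? = some y := by
      rw [hpr, List.getLast?_append_cons] at hlast
      exact hlast
    have hrne : r ≠ [] := by
      intro h0
      rw [h0] at hlastr
      simp at hlastr
      exact hxy hlastr
    have hry : r.getLast? = some y := by
      obtain ⟨t, r', rfl⟩ : ∃ t r', r = t :: r' := by
        cases r with
        | nil => exact absurd rfl hrne
        | cons t r' => exact ⟨t, r', rfl⟩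
      rwa [List.getLast?_cons_cons] at hlastr
    have hyr : y ∈ r := mem_of_getLast?_eq hry
    obtain ⟨q, s2, hqs, hyq⟩ := exists_first_split hyr
    have hglue : (p ++ [x]) ++ (x :: (q ++ [y])).tail ++ (y :: s2).tail = l := by
      rw [hpr, hqs]
      simp
    have hmemp : ∀ s ∈ p, s ∈ l := by
      intro s hs
      rw [hpr]
      exact List.mem_append_left _ hs
    have hmemr : ∀ s ∈ r, s ∈ l := by
      intro s hs
      rw [hpr]
      exact List.mem_append_right _ (List.mem_cons_of_mem _ hs)
    have hmemq : ∀ s ∈ q, s ∈ r := by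
      intro s hs
      rw [hqs]
      exact List.mem_append_left _ hs
    have hmems2 : ∀ s ∈ s2, s ∈ r := by
      intro s hs
      rw [hqs]
      exact List.mem_append_right _ (List.mem_cons_of_mem _ hs)
    have hCg : (p ++ [x]).head? = some x ∧ (p ++ [x]).getLast? = some x ∧
        ∀ s ∈ p ++ [x], s ∈ A := by
      refine ⟨?_, by rw [List.getLast?_concat], ?_⟩
      · cases hp0 : p with
        | nil => simp
        | cons t p' =>
          rw [hp0] at hpr
          rw [hpr] at hhead
          simp only [List.cons_append, List.head?_cons] at hhead ⊢
          exact hhead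
      · intro s hs
        rcases List.mem_append.1 hs with h1 | h2
        · exact hmem s (hmemp s h1)
        · simp at h2; rw [h2]; exact hx
    have hCq : (x :: (q ++ [y])).head? = some x ∧ (x :: (q ++ [y])).getLast? = some y ∧
        2 ≤ (x :: (q ++ [y])).length ∧
        ∀ s ∈ (x :: (q ++ [y])).tail.dropLast, s ∈ A ∧ s ≠ x ∧ s ≠ y := by
      refine ⟨rfl, ?_, by simp, ?_⟩
      · rw [← List.cons_append, List.getLast?_concat]
      · intro s hs
        rw [List.tail_cons, List.dropLast_concat] at hs
        refine ⟨hmem s (hmemr s (hmemq s hs)), ?_, ?_⟩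
        · intro h0; rw [h0] at hs; exact hxr (hmemq x hs)
        · intro h0; rw [h0] at hs; exact hyq hs
    have hCh : (y :: s2).head? = some y ∧ (y :: s2).getLast? = some y ∧
        ∀ s ∈ y :: s2, s ∈ A.erase x := by
      refine ⟨rfl, ?_, ?_⟩
      · have hsplit : l = (p ++ x :: q) ++ y :: s2 := by
          rw [hpr, hqs]
          simp
        rw [hsplit, List.getLast?_append_cons] at hlast
        exact hlast
      · intro s hs
        rcases List.mem_cons.1 hs with h1 | h2
        · rw [h1]; exact Finset.mem_erase.2 ⟨hxy.symm, hy⟩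
        · refine Finset.mem_erase.2 ⟨?_, hmem s (hmemr s (hmems2 s h2))⟩
          intro h0; rw [h0] at h2; exact hxr (hmems2 x h2)
    have hlw : lw P ((p ++ [x]) ++ (x :: (q ++ [y])).tail ++ (y :: s2).tail)
        = lw P (p ++ [x]) * (lw P (x :: (q ++ [y])) * lw P (y :: s2)) :=
      glue_lw P hCg.2.1 hCq.1 hCq.2.1 hCh.1
    rw [hglue] at hlw
    refine ⟨⟨⟨x :: (q ++ [y]), (p ++ [x], y :: s2)⟩, ?_⟩, hglue⟩
    show (if _ ∧ _ ∧ _ ∧ _ then lw P (x :: (q ++ [y])) else 0) *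
        ((if _ ∧ _ ∧ _ then lw P (p ++ [x]) else 0) *
         (if _ ∧ _ ∧ _ then lw P (y :: s2) else 0)) ≠ 0
    rw [if_pos hCq, if_pos hCg, if_pos hCh]
    intro h0
    apply hlwl
    rw [hlw]
    calc lw P (p ++ [x]) * (lw P (x :: (q ++ [y])) * lw P (y :: s2))
        = lw P (x :: (q ++ [y])) * (lw P (p ++ [x]) * lw P (y :: s2)) := mul_left_comm _ _ _
      _ = 0 := h0
  · -- values agree
    rintro ⟨⟨c, b, d⟩, ht⟩
    have ht1 : (if c.head? = some x ∧ c.getLast? = some y ∧ 2 ≤ c.length ∧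
          ∀ s ∈ c.tail.dropLast, s ∈ A ∧ s ≠ x ∧ s ≠ y then lw P c else 0) *
        ((if b.head? = some x ∧ b.getLast? = some x ∧ ∀ s ∈ b, s ∈ A then lw P b else 0) *
         (if d.head? = some y ∧ d.getLast? = some y ∧ ∀ s ∈ d, s ∈ A.erase x
          then lw P d else 0)) ≠ 0 := ht
    obtain ⟨hqc, hgb, hhd⟩ := triple_cond ht1
    have hcc : c = x :: c.tail := head?_eq_cons hqc.1
    have hcsp : c.tail = c.tail.dropLast ++ [y] := by
      refine eq_dropLast_concat ?_
      cases hct : c.tail with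
      | nil => exfalso; rw [hcc, hct] at hqc; have := hqc.2.2.1; simp at this
      | cons t r =>
        have h2 := hqc.2.1
        rw [hcc, hct, List.getLast?_cons_cons] at h2
        exact h2
    have hdd : d = y :: d.tail := head?_eq_cons hhd.1
    have hcond : (b ++ c.tail ++ d.tail).head? = some x ∧
        (b ++ c.tail ++ d.tail).getLast? = some y ∧ ∀ s ∈ b ++ c.tail ++ d.tail, s ∈ A := by
      have hbne : b ≠ [] := by
        intro h0; rw [h0] at hgb; simp at hgb
      have hctne : c.tail ≠ [] := by
        intro h0; rw [h0] at hcsp; simp at hcsp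
      refine ⟨?_, ?_, ?_⟩
      · rw [List.append_assoc, List.head?_append_of_ne_nil _ hbne]
        exact hgb.1
      · cases hdt : d.tail with
        | nil =>
          rw [List.append_nil, List.getLast?_append_of_ne_nil _ hctne, hcsp,
            List.getLast?_concat]
        | cons t r =>
          rw [List.getLast?_append_of_ne_nil _ (List.cons_ne_nil t r)]
          have h2 := hhd.2.1
          rw [hdd, hdt, List.getLast?_cons_cons] at h2
          exact h2
      · intro s hs
        rcases List.mem_append.1 hs with hs1 | hs3
        · rcases List.mem_append.1 hs1 with hs1 | hs2
          · exact hgb.2.2 s hs1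
          · rw [hcsp] at hs2
            rcases List.mem_append.1 hs2 with hs4 | hs5
            · exact (hqc.2.2.2 s hs4).1
            · simp at hs5; rw [hs5]; exact hy
        · exact (Finset.mem_erase.1 (hhd.2.2 s (List.mem_of_mem_tail hs3))).2
    have hlw : lw P (b ++ c.tail ++ d.tail) = lw P b * (lw P c * lw P d) :=
      glue_lw P hgb.2.1 hqc.1 hqc.2.1 hhd.1
    show (if _ ∧ _ ∧ _ then lw P (b ++ c.tail ++ d.tail) else 0) = _
    rw [if_pos hcond, hlw]
    show _ = (if _ ∧ _ ∧ _ ∧ _ then lw P c else 0) *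
        ((if _ ∧ _ ∧ _ then lw P b else 0) * (if _ ∧ _ ∧ _ then lw P d else 0))
    rw [if_pos hqc, if_pos hgb, if_pos hhd, mul_left_comm]

end Split

/-- For an irreducible Markov chain on the finite set `Ā = A ∪ ∂A`
(`∂A ≠ ∅`), distinct `x,y ∈ A`, and
`q(x,y) = μ_x(σ_y < min(τ_x, T_A))` (the probability of reaching `y` strictly before
leaving `A` and before returning to `x`), one has
`G_A(x,y) = q(x,y) · G_A(x,x) · G_{A∖{x}}(y,y)`, i.e. `G_A(x,y) = q(x,y)·F_{{x,y}}(A)`. -/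
theorem stmt_11 {S : Type*} [Fintype S] [DecidableEq S]
    [MeasurableSpace S] [MeasurableSingletonClass S]
    (A : Finset S) (hbd : ∃ z, z ∉ A)
    (P : Matrix S S ℝ) (hnn : ∀ u v, 0 ≤ P u v) (hrow : ∀ u, ∑ v, P u v = 1)
    (hirr : ∀ u v : S, ∃ n : ℕ, 0 < (P ^ n) u v)
    (μ : S → Measure (ℕ → S)) (hprob : ∀ u, IsProbabilityMeasure (μ u))
    (hμ : ∀ (u : S) (n : ℕ) (a : ℕ → S),
      μ u {ω | ∀ i ≤ n, ω i = a i} =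
        ENNReal.ofReal ((if a 0 = u then (1 : ℝ) else 0) *
          ∏ i ∈ Finset.range n, P (a i) (a (i + 1))))
    (x y : S) (hx : x ∈ A) (hy : y ∈ A) (hxy : x ≠ y) :
    greenVisits (μ x) A y =
      μ x {ω | ∃ k : ℕ, 1 ≤ k ∧ ω k = y ∧ ∀ j : ℕ, 1 ≤ j → j < k → ω j ≠ x ∧ ω j ∈ A}
        * (greenVisits (μ x) A x * greenVisits (μ y) (A.erase x) y) := by
  rw [green_list P hnn (μ x) x (hμ x) A y,
    green_list P hnn (μ x) x (hμ x) A x,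
    green_list P hnn (μ y) y (hμ y) (A.erase x) y,
    q_list P hnn A x y (μ x) (hμ x)]
  exact key_split P A x y hx hy hxy
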